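/- In any implication semigroup, the identity x·y·z = x·y·z·ω holds for all x, y, z ∈ S. -/
import Mathlib


theorem stmt_2 {S : Type*} [Semigroup S] (ω : S)
    (h1 : ∀ x y z : S, x * y * z = z * ω * x * y * z * ω * ω)
    (h2 : ω * ω * ω = ω) :
    ∀ x y z : S, x * y * z = x * y * z * ω := by
  have h2' : ω * (ω * ω) = ω := by simp only [mul_assoc] at h2 ⊢; exact h2
  have h1' : ∀ a b c : S, a * (b * c) = c * (ω * (a * (b * (c * (ω * ω))))) := by
    intro a b c
    have h := h1 a b c
    simp only [mul_assoc] at h; exact h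
  have h7 : ω * (ω * (ω * (ω * (ω * (ω * ω))))) = ω := (h1' ω ω ω).symm.trans h2'
  have h4 : ω * (ω * (ω * ω)) = ω := by
    have h := h1' ω ω (ω * ω)
    simp only [mul_assoc] at h
    rw [h7, h2'] at h
    simp only [h]
  intro x y z
  have hB := h1' x y z
  have hBω : x * (y * (z * ω)) = z * (ω * (x * (y * (z * ω)))) := by
    have h := congrArg (· * ω) hB
    simp only [mul_assoc] at h
    rw [h2'] at h
    exact h
  have hA : x * (y * z) = x * (y * (z * (ω * ω))) := by
    calc x * (y * z) = z * (ω * (x * (y * (z * (ω * ω))))) := hB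
      _ = z * (ω * (x * (y * (z * ω)))) * ω := by simp only [mul_assoc]
      _ = x * (y * (z * ω)) * ω := by rw [← hBω]
      _ = x * (y * (z * (ω * ω))) := by simp only [mul_assoc]
  have final : x * (y * z) = x * (y * (z * ω)) := by
    calc x * (y * z) = x * (y * (z * (ω * ω))) := hA
      _ = x * (y * z) * (ω * ω) := by simp only [mul_assoc]
      _ = x * (y * (z * (ω * ω))) * (ω * ω) := by rw [← hA]
      _ = x * (y * (z * (ω * (ω * (ω * ω))))) := by simp only [mul_assoc]
      _ = x * (y * (z * ω)) := by rw [h4]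
  simp only [mul_assoc]; exact final
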